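/- With p_n(t,a;r) defined by p_0 = 1 and p_n = ∂_a p_{n-1} + p_{n-1}(t - rψ_0(a)) where ψ_0 = (log M_f)', the exponential generating function identity holds: e^{λs} (M_f(a)/M_f(a+λ))^r = Σ_{k=0}^∞ (λ^k/k!) p_k(s,a;r), for λ in a neighborhood of 0 where M_f is analytic and positive. -/

import Mathlib

open Real

/-- Taylor series of a real-analytic function at a point sums on a small ball. -/
lemma taylorSum (f : ℝ → ℝ) (x : ℝ) (hf : AnalyticAt ℝ f x) :
    ∃ δ > 0, ∀ l : ℝ, |l| < δ →
      HasSum (fun n : ℕ => l ^ n / (n.factorial : ℝ) * iteratedDeriv n f x) (f (x + l)) := by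
  obtain ⟨q, hq⟩ := hf
  obtain ⟨R, hR⟩ := hq
  obtain ⟨ε, hε0, hεR⟩ := exists_between hR.r_pos
  have hεtop : ε ≠ ⊤ := hεR.ne_top
  refine ⟨ε.toReal, ENNReal.toReal_pos hε0.ne' hεtop, fun l hl => ?_⟩
  have hmem : l ∈ Metric.eball (0 : ℝ) R := by
    rw [Metric.mem_eball, edist_dist]
    have h1 : dist l 0 = |l| := by simp [Real.dist_eq]
    rw [h1]
    calc ENNReal.ofReal |l| < ENNReal.ofReal ε.toReal :=
          ENNReal.ofReal_lt_ofReal_iff (ENNReal.toReal_pos hε0.ne' hεtop) |>.mpr hl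
      _ = ε := ENNReal.ofReal_toReal hεtop
      _ < R := hεR
  have H := hR.hasSum_iteratedFDeriv hmem
  convert H using 2 with n
  · rfl
  have h2 : (iteratedFDeriv ℝ n f x : (Fin n → ℝ) → ℝ) (fun _ => l)
      = (∏ _i : Fin n, l) • iteratedDeriv n f x :=
    iteratedFDeriv_apply_eq_iteratedDeriv_mul_prod
  rw [h2]
  simp [Finset.prod_const, smul_eq_mul, div_eq_mul_inv]
  ring

theorem stmt_6
    (M : ℝ → ℝ) (hpos : ∀ a, 0 < M a)
    (hanal : ∀ a, AnalyticAt ℝ M a)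
    (r : ℕ) (p : ℕ → ℝ → ℝ → ℝ)
    (hp0 : ∀ t a, p 0 t a = 1)
    (hprec : ∀ n t a, p (n + 1) t a =
      deriv (fun b => p n t b) a
        + p n t a * (t - r * deriv (fun b => Real.log (M b)) a)) :
    ∀ (s a : ℝ), ∃ δ > 0, ∀ l : ℝ, |l| < δ →
      HasSum (fun k : ℕ => l ^ k / (k.factorial : ℝ) * p k s a)
        (Real.exp (l * s) * (M a / M (a + l)) ^ r) := by
  intro s a
  set H : ℝ → ℝ := fun b => Real.exp (b * s - r * Real.log (M b)) with hHdef
  have hMne : ∀ b, M b ≠ 0 := fun b => (hpos b).ne'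
  have hMrne : ∀ b, (M b) ^ r ≠ 0 := fun b => pow_ne_zero _ (hMne b)
  have hHalt : H = fun b => Real.exp (b * s) / (M b) ^ r := by
    funext b
    show Real.exp (b * s - r * Real.log (M b)) = _
    rw [Real.exp_sub, Real.exp_nat_mul, Real.exp_log (hpos b)]
  have hHpos : ∀ b, 0 < H b := fun b => Real.exp_pos _
  have hHanal : ∀ b, AnalyticAt ℝ H b := by
    intro b
    rw [hHalt]
    exact ((analyticAt_id.mul analyticAt_const).rexp).div ((hanal b).pow r) (hMrne b)
  -- derivative of log ∘ M
  have hlogM : ∀ b, deriv (fun c => Real.log (M c)) b = deriv M b / M b := by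
    intro b
    exact (((hanal b).differentiableAt.hasDerivAt).log (hMne b)).deriv
  -- derivative of H
  have hHd : ∀ b, HasDerivAt H (H b * (s - r * (deriv M b / M b))) b := by
    intro b
    have hM : HasDerivAt M (deriv M b) b := (hanal b).differentiableAt.hasDerivAt
    have hin : HasDerivAt (fun c : ℝ => c * s - r * Real.log (M c))
        (s - r * (deriv M b / M b)) b := by
      have h1 : HasDerivAt (fun c : ℝ => c * s) s b := by
        simpa using (hasDerivAt_id b).mul_const s
      have h2 : HasDerivAt (fun c : ℝ => (r : ℝ) * Real.log (M c))
          ((r : ℝ) * (deriv M b / M b)) b := (hM.log (hMne b)).const_mul _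
      exact h1.sub h2
    simpa [hHdef, mul_comm] using hin.exp
  -- H is C^∞, so iterated derivatives are differentiable
  have hHcd : ContDiff ℝ (⊤ : ℕ∞) H := by
    rw [contDiff_iff_contDiffAt]
    exact fun b => (hHanal b).contDiffAt
  have hHiter : ∀ n, Differentiable ℝ (iteratedDeriv n H) := by
    intro n
    exact (contDiff_iff_iteratedDeriv.mp hHcd).2 n (by exact_mod_cast WithTop.coe_lt_top _)
  -- key identity
  have key : ∀ n b, iteratedDeriv n H b = H b * p n s b := by
    intro n
    induction n with
    | zero => intro b; simp [hp0]
    | succ n ih =>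
      intro b
      have hHne := (hHpos b).ne'
      have hfun : (fun c => p n s c) = fun c => iteratedDeriv n H c / H c := by
        funext c
        rw [ih c, mul_div_assoc, mul_comm]
        field_simp [(hHpos c).ne']
      have hq : HasDerivAt (fun c => iteratedDeriv n H c / H c)
          ((iteratedDeriv (n + 1) H b * H b - iteratedDeriv n H b
            * (H b * (s - r * (deriv M b / M b)))) / (H b) ^ 2) b := by
        have h1 : HasDerivAt (iteratedDeriv n H) (iteratedDeriv (n + 1) H b) b := by
          have := (hHiter n b).hasDerivAt
          rwa [show deriv (iteratedDeriv n H) b = iteratedDeriv (n + 1) H b by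
            rw [iteratedDeriv_succ]] at this
        exact h1.div (hHd b) hHne
      rw [hprec, hfun, hq.deriv, hlogM b, ih b]
      field_simp
      ring
  -- now use the Taylor series
  obtain ⟨δ, hδ, hsum⟩ := taylorSum H a (hHanal a)
  refine ⟨δ, hδ, fun l hl => ?_⟩
  have h := (hsum l hl).div_const (H a)
  have hHne : H a ≠ 0 := (hHpos a).ne'
  have hterm : (fun n : ℕ => l ^ n / (n.factorial : ℝ) * iteratedDeriv n H a / H a)
      = fun k : ℕ => l ^ k / (k.factorial : ℝ) * p k s a := by
    funext k
    rw [key k a]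
    field_simp
  rw [hterm] at h
  have hval : H (a + l) / H a = Real.exp (l * s) * (M a / M (a + l)) ^ r := by
    rw [hHdef, ← Real.exp_sub]
    have h1 : (a + l) * s - r * Real.log (M (a + l)) - (a * s - r * Real.log (M a))
        = l * s + r * Real.log (M a / M (a + l)) := by
      rw [Real.log_div (hMne a) (hMne (a + l))]
      ring
    rw [h1, Real.exp_add, Real.exp_nat_mul, Real.exp_log (div_pos (hpos a) (hpos (a + l)))]
  rwa [hval] at h
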